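/- arXiv:1403.0292 — 4 statements merged into one kernel-verified Lean document; each statement's English description precedes it below -/
import Mathlib

section
/- Let T(t) be the right-translation semigroup on L²(0,∞), i.e. (T(t)f)(x) = f(x−t) for x ≥ t and 0 otherwise, with generator D. If f ∈ ∩_k dom(D^k) satisfies ‖D^k f‖ ≤ C σ^k for all k ∈ ℕ and some constants C, σ > 0, then f = 0. In other words, every exponential-vector space E_σ(D) of this semigroup is trivial. -/
open Filter Topology MeasureTheory

section Aux

local notation "μ" => MeasureTheory.volume.restrict (Set.Ioi (0 : ℝ))
local notation "Hsp" => Lp ℂ 2 (MeasureTheory.volume.restrict (Set.Ioi (0 : ℝ)))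

/-- The right-translation semigroup is isometric. -/
lemma aux_iso (T : ℝ → Hsp →L[ℂ] Hsp)
    (hTtrans : ∀ t : ℝ, 0 ≤ t → ∀ f : Hsp,
      (T t f : ℝ → ℂ) =ᵐ[μ] fun x : ℝ => if t ≤ x then f (x - t) else 0)
    {t : ℝ} (ht : 0 ≤ t) (u : Hsp) : ‖T t u‖ = ‖u‖ := by
  rw [Lp.norm_def, Lp.norm_def]
  congr 1
  rw [eLpNorm_congr_ae (hTtrans t ht u)]
  rw [eLpNorm_eq_lintegral_rpow_enorm_toReal (by norm_num) (by norm_num),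
      eLpNorm_eq_lintegral_rpow_enorm_toReal (by norm_num) (by norm_num)]
  congr 1
  have h2 : ((2 : ENNReal)).toReal = (2 : ℝ) := by norm_num
  rw [h2]
  set G : ℝ → ENNReal := fun y => (‖(u : ℝ → ℂ) y‖ₑ : ENNReal) ^ (2 : ℝ) with hG
  have step1 : (∫⁻ x in Set.Ioi (0:ℝ),
      (‖(if t ≤ x then (u : ℝ → ℂ) (x - t) else 0)‖ₑ : ENNReal) ^ (2:ℝ) ∂volume)
      = ∫⁻ x in Set.Ioi (0:ℝ), (Set.Ioi t).indicator (fun x => G (x - t)) x ∂volume := by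
    apply lintegral_congr_ae
    have hnull : (volume.restrict (Set.Ioi (0:ℝ))) {t} = 0 := by
      refine le_antisymm ?_ zero_le
      calc (volume.restrict (Set.Ioi (0:ℝ))) {t} ≤ volume {t} :=
            Measure.restrict_apply_le _ _
        _ = 0 := measure_singleton t
    filter_upwards [measure_eq_zero_iff_ae_notMem.mp hnull] with x hx
    rcases lt_trichotomy x t with h | h | h
    · rw [if_neg (not_le.2 h), Set.indicator_of_notMem (by simp [h.not_gt])]
      simp [ENNReal.zero_rpow_of_pos]
    · exact absurd (Set.mem_singleton_iff.2 h) hx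
    · rw [if_pos h.le, Set.indicator_of_mem (by simpa using h)]
  rw [step1]
  rw [lintegral_indicator measurableSet_Ioi, Measure.restrict_restrict measurableSet_Ioi]
  have hinter : Set.Ioi t ∩ Set.Ioi (0:ℝ) = Set.Ioi t :=
    Set.inter_eq_self_of_subset_left (fun x hx => lt_of_le_of_lt ht hx)
  rw [hinter]
  have step3 : (∫⁻ x in Set.Ioi t, G (x - t) ∂volume) = ∫⁻ x in Set.Ioi (0:ℝ), G x ∂volume := by
    rw [← lintegral_indicator measurableSet_Ioi, ← lintegral_indicator measurableSet_Ioi]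
    rw [← lintegral_add_right_eq_self (fun x => (Set.Ioi t).indicator (fun y => G (y - t)) x) t]
    apply lintegral_congr
    intro x
    by_cases hx : 0 < x
    · rw [Set.indicator_of_mem (by simpa using hx), Set.indicator_of_mem (by simpa using hx)]
      simp
    · rw [Set.indicator_of_notMem (by simpa using hx),
          Set.indicator_of_notMem (by simpa using hx)]
  rw [step3]

/-- Differentiability of orbits of vectors in the domain of the generator. -/
lemma aux_deriv (T : ℝ → Hsp →L[ℂ] Hsp)
    (hTadd : ∀ s t : ℝ, 0 ≤ s → 0 ≤ t → T (s + t) = (T s).comp (T t))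
    (hTcont : ∀ f : Hsp, ContinuousOn (fun t : ℝ => T t f) (Set.Ici (0 : ℝ)))
    (hiso : ∀ t : ℝ, 0 ≤ t → ∀ u : Hsp, ‖T t u‖ = ‖u‖)
    (u v : Hsp)
    (hv : Tendsto (fun s : ℝ => s⁻¹ • (T s u - u)) (nhdsWithin 0 (Set.Ioi 0)) (𝓝 v))
    {t : ℝ} (ht : 0 ≤ t) :
    HasDerivWithinAt (fun s => T s u) (T t v) (Set.Ici 0) t := by
  set q : ℝ → Hsp := fun r => r⁻¹ • (T r u - u) with hq
  rw [hasDerivWithinAt_iff_tendsto_slope]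
  have hsub : Set.Ici (0:ℝ) \ {t} ⊆ Set.Ioi t ∪ Set.Ico 0 t := by
    rintro x ⟨hx, hxt⟩
    rcases lt_or_gt_of_ne (fun h => hxt (by simpa using h)) with h | h
    · exact Or.inr ⟨hx, h⟩
    · exact Or.inl h
  refine Tendsto.mono_left ?_ (nhdsWithin_mono t hsub)
  rw [nhdsWithin_union]
  rw [tendsto_sup]
  constructor
  · -- right derivative
    have hshift : Tendsto (fun x => x - t) (nhdsWithin t (Set.Ioi t))
        (nhdsWithin 0 (Set.Ioi 0)) := by
      apply tendsto_nhdsWithin_of_tendsto_nhds_of_eventually_within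
      · have : Tendsto (fun x : ℝ => x - t) (𝓝 t) (𝓝 (t - t)) :=
          (continuous_id.sub continuous_const).tendsto t
        rw [sub_self] at this
        exact this.mono_left nhdsWithin_le_nhds
      · filter_upwards [self_mem_nhdsWithin] with x hx
        exact sub_pos.2 (Set.mem_Ioi.mp hx)
    have hmain : Tendsto (fun x => T t (q (x - t))) (nhdsWithin t (Set.Ioi t))
        (𝓝 (T t v)) := ((T t).continuous.tendsto v).comp (hv.comp hshift)
    apply hmain.congr'
    filter_upwards [self_mem_nhdsWithin] with x hx
    have hxt : (0:ℝ) ≤ x - t := sub_nonneg.2 (le_of_lt hx)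
    have hTx : T x u = T t (T (x - t) u) := by
      have := hTadd t (x - t) ht hxt
      rw [show t + (x - t) = x by ring] at this
      rw [this]; rfl
    show T t (q (x - t)) = slope (fun s => T s u) t x
    rw [slope_def_module]
    rw [hq]
    simp only []
    rw [ContinuousLinearMap.map_smul_of_tower, map_sub, ← hTx]
  · -- left derivative
    have hshift2 : Tendsto (fun x => t - x) (nhdsWithin t (Set.Ico 0 t))
        (nhdsWithin 0 (Set.Ioi 0)) := by
      apply tendsto_nhdsWithin_of_tendsto_nhds_of_eventually_within
      · have : Tendsto (fun x : ℝ => t - x) (𝓝 t) (𝓝 (t - t)) :=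
          (continuous_const.sub continuous_id).tendsto t
        rw [sub_self] at this
        exact this.mono_left nhdsWithin_le_nhds
      · filter_upwards [self_mem_nhdsWithin] with x hx
        exact sub_pos.2 hx.2
    have h1 : Tendsto (fun x => q (t - x) - v) (nhdsWithin t (Set.Ico 0 t)) (𝓝 0) := by
      have := (hv.comp hshift2).sub (tendsto_const_nhds (x := v))
      simpa using this
    have h2 : Tendsto (fun x => T x (q (t - x) - v)) (nhdsWithin t (Set.Ico 0 t)) (𝓝 0) := by
      apply squeeze_zero_norm' (a := fun x => ‖q (t - x) - v‖)
      · filter_upwards [self_mem_nhdsWithin] with x hx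
        rw [hiso x hx.1]
      · simpa using h1.norm
    have h3 : Tendsto (fun x => T x v) (nhdsWithin t (Set.Ico 0 t)) (𝓝 (T t v)) := by
      have := (hTcont v) t ht
      exact this.mono_left (nhdsWithin_mono t Set.Ico_subset_Ici_self)
    have hsum := h2.add h3
    rw [zero_add] at hsum
    apply hsum.congr'
    filter_upwards [self_mem_nhdsWithin] with x hx
    have hxt : (0:ℝ) ≤ t - x := sub_nonneg.2 (le_of_lt hx.2)
    have hTt : T t u = T x (T (t - x) u) := by
      have := hTadd x (t - x) hx.1 hxt
      rw [show x + (t - x) = t by ring] at this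
      rw [this]; rfl
    show T x (q (t - x) - v) + T x v = slope (fun s => T s u) t x
    rw [map_sub, sub_add_cancel]
    rw [slope_def_module]
    rw [hq]
    simp only []
    rw [ContinuousLinearMap.map_smul_of_tower, map_sub, ← hTt]
    rw [show (x - t)⁻¹ = -(t - x)⁻¹ by rw [show x - t = -(t - x) by ring, ← neg_inv],
        show (T x u - T t u : Hsp) = -(T t u - T x u) by rw [neg_sub]]
    rw [neg_smul_neg]

/-- Iterated mean-value estimate: a chain of functions with uniformly bounded
derivatives that all vanish on `[a, ∞)` vanishes on `[0, ∞)`. -/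
lemma aux_vanish (φ : ℕ → ℝ → ℂ) (M σ : ℝ) (hσ : 0 < σ) (hM : 0 ≤ M)
    (hd : ∀ k : ℕ, ∀ t : ℝ, 0 ≤ t → HasDerivWithinAt (φ k) (φ (k+1) t) (Set.Ici 0) t)
    (hb : ∀ k : ℕ, ∀ t : ℝ, 0 ≤ t → ‖φ k t‖ ≤ M * σ ^ k)
    (a : ℝ)
    (h0 : ∀ k : ℕ, ∀ t : ℝ, 0 ≤ t → a ≤ t → φ k t = 0) :
    ∀ k : ℕ, ∀ t : ℝ, 0 ≤ t → φ k t = 0 := by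
  set δ : ℝ := (2 * σ)⁻¹ with hδdef
  have hδ : 0 < δ := by positivity
  have step : ∀ s : ℝ, (∀ k t, 0 ≤ t → s ≤ t → φ k t = 0) →
      ∀ k t, 0 ≤ t → s - δ ≤ t → φ k t = 0 := by
    intro s hvan k t ht hts
    rcases le_or_gt s t with hc | hc
    · exact hvan k t ht hc
    have hs0 : (0:ℝ) ≤ s := le_of_lt (lt_of_le_of_lt ht hc)
    have key : ∀ n : ℕ, ∀ k : ℕ, ∀ x, x ∈ Set.Icc t s → ‖φ k x‖ ≤ M * σ ^ k * (2⁻¹ : ℝ) ^ n := by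
      intro n
      induction n with
      | zero =>
        intro k x hx
        simpa using hb k x (le_trans ht hx.1)
      | succ n ih =>
        intro k x hx
        have hx0 : (0:ℝ) ≤ x := le_trans ht hx.1
        have hφs : φ k s = 0 := hvan k s hs0 le_rfl
        have hderiv : ∀ y ∈ Set.Icc x s, HasDerivWithinAt (φ k) (φ (k+1) y) (Set.Icc x s) y :=
          fun y hy => (hd k y (le_trans hx0 hy.1)).mono (fun z hz => le_trans hx0 hz.1)
        have hbound : ∀ y ∈ Set.Icc x s, ‖φ (k+1) y‖ ≤ M * σ ^ (k+1) * (2⁻¹ : ℝ) ^ n :=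
          fun y hy => ih (k+1) y ⟨le_trans hx.1 hy.1, hy.2⟩
        have mvt := Convex.norm_image_sub_le_of_norm_hasDerivWithin_le hderiv hbound
          (convex_Icc x s) (Set.left_mem_Icc.2 hx.2) (Set.right_mem_Icc.2 hx.2)
        rw [hφs, zero_sub, norm_neg] at mvt
        have hxs : ‖s - x‖ ≤ δ := by
          rw [Real.norm_eq_abs, abs_of_nonneg (sub_nonneg.2 hx.2)]
          have := hts.trans hx.1
          linarith
        have hC' : (0:ℝ) ≤ M * σ ^ (k+1) * (2⁻¹ : ℝ) ^ n := by positivity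
        calc ‖φ k x‖ ≤ M * σ ^ (k+1) * (2⁻¹:ℝ) ^ n * ‖s - x‖ := mvt
          _ ≤ M * σ ^ (k+1) * (2⁻¹:ℝ) ^ n * δ := by
              exact mul_le_mul_of_nonneg_left hxs hC'
          _ = M * σ ^ k * (2⁻¹:ℝ) ^ (n+1) := by
              rw [hδdef]; field_simp; ring
    have hlim : Tendsto (fun n : ℕ => M * σ ^ k * (2⁻¹:ℝ) ^ n) atTop (𝓝 0) := by
      have := (tendsto_pow_atTop_nhds_zero_of_lt_one (r := (2⁻¹:ℝ)) (by norm_num)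
        (by norm_num)).const_mul (M * σ ^ k)
      simpa using this
    have : ‖φ k t‖ ≤ 0 :=
      ge_of_tendsto' hlim (fun n => key n k t ⟨le_rfl, le_of_lt hc⟩)
    exact norm_le_zero_iff.mp this
  have main : ∀ j : ℕ, ∀ k t, 0 ≤ t → a - j * δ ≤ t → φ k t = 0 := by
    intro j
    induction j with
    | zero => intro k t ht hat; exact h0 k t ht (by simpa using hat)
    | succ j ih =>
      intro k t ht hat
      refine step (a - j * δ) ih k t ht ?_
      push_cast at hat ⊢
      linarith
  intro k t ht
  obtain ⟨j, hj⟩ := exists_nat_ge (a / δ)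
  refine main j k t ht ?_
  rw [div_le_iff₀ hδ] at hj
  linarith

end Aux

/-- Let `T(t)` be the right-translation semigroup on `L²(0,∞)`
(`(T(t)f)(x) = f(x-t)` for `x ≥ t`, `0` otherwise) with generator `D`.  If
`f ∈ ∩_k dom(D^k)` (encoded by the chain `Df` with `Df (k+1) = D (Df k)` via the
strong-limit definition of the generator) satisfies `‖D^k f‖ ≤ C σ^k` for all `k`,
then `f = 0`: every exponential-vector space of this semigroup is trivial. -/
theorem stmt6
    (T : ℝ → (Lp ℂ 2 (volume.restrict (Set.Ioi (0 : ℝ)))) →L[ℂ]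
          (Lp ℂ 2 (volume.restrict (Set.Ioi (0 : ℝ)))))
    (hT0 : T 0 = 1)
    (hTadd : ∀ s t : ℝ, 0 ≤ s → 0 ≤ t → T (s + t) = (T s).comp (T t))
    (hTtrans : ∀ t : ℝ, 0 ≤ t → ∀ f : Lp ℂ 2 (volume.restrict (Set.Ioi (0 : ℝ))),
      (T t f : ℝ → ℂ) =ᵐ[volume.restrict (Set.Ioi (0 : ℝ))]
        fun x : ℝ => if t ≤ x then f (x - t) else 0)
    (hTcont : ∀ f : Lp ℂ 2 (volume.restrict (Set.Ioi (0 : ℝ))),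
      ContinuousOn (fun t : ℝ => T t f) (Set.Ici (0 : ℝ)))
    (f : Lp ℂ 2 (volume.restrict (Set.Ioi (0 : ℝ))))
    (Df : ℕ → Lp ℂ 2 (volume.restrict (Set.Ioi (0 : ℝ))))
    (hDf0 : Df 0 = f)
    (hgen : ∀ k : ℕ,
      Tendsto (fun t : ℝ => (t : ℂ)⁻¹ • (T t (Df k) - Df k)) (nhdsWithin 0 (Set.Ioi 0))
        (𝓝 (Df (k + 1))))
    (C σ : ℝ) (hC : 0 < C) (hσ : 0 < σ)
    (hbound : ∀ k : ℕ, ‖Df k‖ ≤ C * σ ^ k) :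
    f = 0 := by
  classical
  have hiso : ∀ t : ℝ, 0 ≤ t → ∀ u, ‖T t u‖ = ‖u‖ :=
    fun t ht u => aux_iso T hTtrans ht u
  have horbit : ∀ (k : ℕ) (t : ℝ), 0 ≤ t →
      HasDerivWithinAt (fun s => T s (Df k)) (T t (Df (k+1))) (Set.Ici 0) t := by
    intro k t ht
    refine aux_deriv T hTadd hTcont hiso (Df k) (Df (k+1)) ?_ ht
    apply (hgen k).congr
    intro s
    rw [← Complex.ofReal_inv, Complex.coe_smul]
    rfl
  -- key step: `f` vanishes a.e. on `(0, n)` for every `n : ℕ`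
  have key : ∀ n : ℕ, ∀ᵐ x ∂(volume.restrict (Set.Ioi (0:ℝ))),
      (Set.Ioo (0:ℝ) (n:ℝ)).indicator (f : ℝ → ℂ) x = 0 := by
    intro n
    set g0 : ℝ → ℂ := (Set.Ioo (0:ℝ) (n:ℝ)).indicator (f : ℝ → ℂ) with hg0def
    have hg0 : MemLp g0 2 (volume.restrict (Set.Ioi (0:ℝ))) :=
      (Lp.memLp f).indicator measurableSet_Ioo
    set g : Lp ℂ 2 (volume.restrict (Set.Ioi (0:ℝ))) := hg0.toLp g0 with hgdef
    have hgcoe : (g : ℝ → ℂ) =ᵐ[volume.restrict (Set.Ioi (0:ℝ))] g0 := hg0.coeFn_toLp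
    set φ : ℕ → ℝ → ℂ := fun k t => (inner ℂ g (T t (Df k)) : ℂ) with hφdef
    have hd : ∀ k : ℕ, ∀ t : ℝ, 0 ≤ t →
        HasDerivWithinAt (φ k) (φ (k+1) t) (Set.Ici 0) t := by
      intro k t ht
      have hF := horbit k t ht
      have hL := ((innerSL ℂ g).restrictScalars ℝ).hasFDerivAt
        (x := T t (Df k))
      have := hL.comp_hasDerivWithinAt t hF
      exact this
    have hb : ∀ k : ℕ, ∀ t : ℝ, 0 ≤ t → ‖φ k t‖ ≤ (‖g‖ * C) * σ ^ k := by
      intro k t ht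
      calc ‖φ k t‖ ≤ ‖g‖ * ‖T t (Df k)‖ := norm_inner_le_norm _ _
        _ = ‖g‖ * ‖Df k‖ := by rw [hiso t ht]
        _ ≤ ‖g‖ * (C * σ ^ k) :=
            mul_le_mul_of_nonneg_left (hbound k) (norm_nonneg g)
        _ = (‖g‖ * C) * σ ^ k := by ring
    have h0 : ∀ k : ℕ, ∀ t : ℝ, 0 ≤ t → (n:ℝ) ≤ t → φ k t = 0 := by
      intro k t ht hnt
      rw [hφdef]
      simp only []
      rw [L2.inner_def]
      rw [integral_eq_zero_of_ae]
      filter_upwards [hgcoe, hTtrans t ht (Df k)] with x hgx hTx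
      rw [hgx, hTx]
      by_cases hmem : x ∈ Set.Ioo (0:ℝ) (n:ℝ)
      · have : ¬ (t ≤ x) := not_le.2 (lt_of_lt_of_le hmem.2 hnt)
        simp [this]
      · rw [hg0def, Set.indicator_of_notMem hmem]
        simp
    have hvan := aux_vanish φ (‖g‖ * C) σ hσ (by positivity) hd hb n h0 0 0 le_rfl
    -- φ 0 0 = ⟪g, f⟫
    have hgf : (inner ℂ g f : ℂ) = 0 := by
      rw [hφdef] at hvan
      simp only [hT0, hDf0, ContinuousLinearMap.one_apply] at hvan
      exact hvan
    -- ⟪g, f - g⟫ = 0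
    have hgfg : (inner ℂ g (f - g) : ℂ) = 0 := by
      rw [L2.inner_def]
      rw [integral_eq_zero_of_ae]
      filter_upwards [hgcoe, Lp.coeFn_sub f g] with x hgx hsx
      rw [hgx, hsx]
      by_cases hmem : x ∈ Set.Ioo (0:ℝ) (n:ℝ)
      · have : g0 x = (f : ℝ → ℂ) x := Set.indicator_of_mem hmem _
        simp [Pi.sub_apply, hgx, this]
      · have : g0 x = 0 := Set.indicator_of_notMem hmem _
        simp [this]
    have hgg : (inner ℂ g g : ℂ) = 0 := by
      have h := inner_sub_right (𝕜 := ℂ) g f g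
      rw [hgfg, hgf] at h
      have h2 := h.symm
      rw [zero_sub, neg_eq_zero] at h2
      exact h2
    have hg_zero : g = 0 := inner_self_eq_zero.mp hgg
    have : (g : ℝ → ℂ) =ᵐ[volume.restrict (Set.Ioi (0:ℝ))] 0 := by
      rw [hg_zero]
      exact Lp.coeFn_zero _ _ _
    filter_upwards [hgcoe.symm.trans this] with x hx
    exact hx
  rw [Lp.eq_zero_iff_ae_eq_zero]
  have hall := (ae_all_iff).2 key
  filter_upwards [hall, ae_restrict_mem measurableSet_Ioi] with x hx hx0
  have hn : x < (⌊x⌋₊ + 1 : ℕ) := by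
    push_cast
    exact Nat.lt_floor_add_one x
  have := hx (⌊x⌋₊ + 1)
  rw [Set.indicator_of_mem (Set.mem_Ioo.mpr ⟨Set.mem_Ioi.mp hx0, hn⟩)] at this
  exact this
end

section
/- For every n ∈ ℕ and every nonzero real x, the n-th derivative of the sinc function sinc(x) = sin(πx)/(πx) satisfies |sinc^{(n)}(x)| ≤ C/|x| for a constant C depending only on n. -/
open Filter Topology

/-- `sinc x = sin(πx)/(πx)` for `x ≠ 0`, `sinc 0 = 1`. -/
noncomputable def sinc (x : ℝ) : ℝ :=
  if x = 0 then 1 else Real.sin (Real.pi * x) / (Real.pi * x)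

/-- Complex version of `sinc`. -/
noncomputable def csinc (z : ℂ) : ℂ :=
  if z = 0 then 1 else Complex.sin (Real.pi * z) / (Real.pi * z)

lemma csinc_diff_ne {z : ℂ} (hz : z ≠ 0) : DifferentiableAt ℂ csinc z := by
  have h : (fun w => Complex.sin (Real.pi * w) / (Real.pi * w)) =ᶠ[𝓝 z] csinc := by
    filter_upwards [isOpen_ne.mem_nhds hz] with w hw
    simp [csinc, hw]
  refine DifferentiableAt.congr_of_eventuallyEq ?_ h.symm
  apply DifferentiableAt.div
  · exact (Complex.differentiable_sin _).comp z ((differentiable_id.const_mul _) z)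
  · exact (differentiable_id.const_mul _) z
  · simp [hz, Real.pi_ne_zero]

lemma csinc_cont0 : ContinuousAt csinc 0 := by
  have hd : HasDerivAt Complex.sin 1 0 := by simpa using Complex.hasDerivAt_sin 0
  have hs : Tendsto (fun w : ℂ => Complex.sin w / w) (𝓝[≠] 0) (𝓝 1) := by
    refine (hasDerivAt_iff_tendsto_slope.mp hd).congr fun z => ?_
    simp [slope_def_field]
  have hmul : Tendsto (fun z : ℂ => (Real.pi : ℂ) * z) (𝓝[≠] 0) (𝓝[≠] 0) := by
    apply Tendsto.inf
    · exact (continuous_mul_left (Real.pi:ℂ)).tendsto' 0 0 (by simp)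
    · refine tendsto_principal_principal.2 fun z hz => ?_
      simp only [Set.mem_compl_iff, Set.mem_singleton_iff] at *
      exact mul_ne_zero (by exact_mod_cast Real.pi_ne_zero) hz
  have h1 : Tendsto csinc (𝓝[≠] 0) (𝓝 1) := by
    refine ((hs.comp hmul).congr' ?_)
    filter_upwards [self_mem_nhdsWithin] with w hw
    simp only [Set.mem_compl_iff, Set.mem_singleton_iff] at hw
    simp [csinc, hw]
  have h0 : csinc 0 = 1 := by simp [csinc]
  rw [ContinuousAt, h0, ← nhdsNE_sup_pure 0, tendsto_sup]
  exact ⟨h1, h0 ▸ tendsto_pure_nhds csinc 0⟩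

lemma csinc_differentiable : Differentiable ℂ csinc := by
  intro z
  rcases eq_or_ne z 0 with rfl | hz
  · refine (Complex.analyticAt_of_differentiable_on_punctured_nhds_of_continuousAt ?_
      csinc_cont0).differentiableAt
    filter_upwards [self_mem_nhdsWithin] with w hw
    exact csinc_diff_ne hw
  · exact csinc_diff_ne hz

lemma sinc_eq_re : sinc = fun x : ℝ => (csinc x).re := by
  funext x
  rcases eq_or_ne x 0 with rfl | hx
  · simp [sinc, csinc]
  · have hx' : (x : ℂ) ≠ 0 := by exact_mod_cast hx
    simp only [sinc, csinc, if_neg hx, if_neg hx']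
    rw [show ((Real.pi : ℂ) * (x:ℂ)) = ((Real.pi * x : ℝ) : ℂ) by push_cast; ring,
      ← Complex.ofReal_sin, ← Complex.ofReal_div, Complex.ofReal_re]

lemma sinc_contDiff : ContDiff ℝ ⊤ sinc := by
  rw [sinc_eq_re]
  have h : ContDiff ℂ ⊤ csinc := csinc_differentiable.contDiff
  exact Complex.reCLM.contDiff.comp ((h.restrict_scalars ℝ).comp Complex.ofRealCLM.contDiff)

lemma sin_pi_iter (n : ℕ) : iteratedDeriv n (fun x : ℝ => Real.sin (Real.pi * x))
    = fun x => Real.pi ^ n * Real.sin (Real.pi * x + n * (Real.pi / 2)) := by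
  induction n with
  | zero => simp
  | succ n ih =>
    rw [iteratedDeriv_succ, ih]
    funext x
    have hu : HasDerivAt (fun x : ℝ => Real.pi * x + n * (Real.pi / 2)) Real.pi x := by
      simpa using ((hasDerivAt_id x).const_mul Real.pi).add_const ((n:ℝ) * (Real.pi / 2))
    have h : HasDerivAt (fun x : ℝ => Real.pi ^ n * Real.sin (Real.pi * x + n * (Real.pi / 2)))
        (Real.pi ^ n * (Real.cos (Real.pi * x + n * (Real.pi / 2)) * Real.pi)) x := by
      simpa [Function.comp] using ((Real.hasDerivAt_sin _).comp x hu).const_mul (Real.pi ^ n)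
    rw [h.deriv]
    rw [show Real.pi * x + ((n:ℕ)+1 : ℕ) * (Real.pi / 2)
        = (Real.pi * x + n * (Real.pi / 2)) + Real.pi / 2 by push_cast; ring,
      Real.sin_add_pi_div_two]
    ring

lemma mul_iter (g : ℝ → ℝ) (hg : ContDiff ℝ ⊤ g) (n : ℕ) :
    iteratedDeriv (n + 1) (fun x => x * g x)
    = fun x => x * iteratedDeriv (n + 1) g x + (n + 1 : ℕ) * iteratedDeriv n g x := by
  have hdiff : ∀ k : ℕ, Differentiable ℝ (iteratedDeriv k g) := fun k =>
    hg.differentiable_iteratedDeriv k (by simp)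
  induction n with
  | zero =>
    simp only [zero_add, iteratedDeriv_one, iteratedDeriv_zero, Nat.cast_one]
    funext x
    have h : HasDerivAt (fun y : ℝ => y * g y) (g x + x * deriv g x) x := by
      have := (hasDerivAt_id x).mul ((hdiff 0 x).hasDerivAt)
      simp only [iteratedDeriv_zero] at this
      simp only [one_mul, id_eq] at this
      exact this
    rw [h.deriv]
    ring
  | succ n ih =>
    rw [iteratedDeriv_succ, ih]
    funext x
    have h1 : HasDerivAt (fun x => x * iteratedDeriv (n+1) g x)
        (iteratedDeriv (n+1) g x + x * deriv (iteratedDeriv (n+1) g) x) x := by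
      have := (hasDerivAt_id x).mul ((hdiff (n+1) x).hasDerivAt)
      simp only [one_mul, id_eq] at this
      exact this
    have h2 : HasDerivAt (fun x => ((n:ℝ)+1) * iteratedDeriv n g x)
        (((n:ℝ)+1) * iteratedDeriv (n+1) g x) x := by
      have := ((hdiff n x).hasDerivAt).const_mul ((n:ℝ)+1)
      rwa [← iteratedDeriv_succ] at this
    have heq : (fun x => x * iteratedDeriv (n + 1) g x + (↑(n + 1) : ℝ) * iteratedDeriv n g x)
        = fun x => x * iteratedDeriv (n+1) g x + ((n:ℝ)+1) * iteratedDeriv n g x := by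
      push_cast; rfl
    rw [heq, (show HasDerivAt (fun x => x * iteratedDeriv (n+1) g x + ((n:ℝ)+1) * iteratedDeriv n g x) _ x from h1.add h2).deriv, ← iteratedDeriv_succ]
    push_cast; ring

lemma sin_eq_mul_sinc : (fun x : ℝ => Real.sin (Real.pi * x))
    = fun x => Real.pi * (x * sinc x) := by
  funext x
  rcases eq_or_ne x 0 with rfl | hx
  · simp
  · rw [sinc, if_neg hx]
    field_simp

lemma key_identity (n : ℕ) (x : ℝ) :
    Real.pi ^ (n+1) * Real.sin (Real.pi * x + (n+1 : ℕ) * (Real.pi / 2))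
    = Real.pi * (x * iteratedDeriv (n+1) sinc x + (n+1 : ℕ) * iteratedDeriv n sinc x) := by
  have h1 : ContDiff ℝ ⊤ (fun x : ℝ => x * sinc x) := contDiff_id.mul sinc_contDiff
  have e : iteratedDeriv (n+1) (fun x : ℝ => Real.sin (Real.pi * x))
      = iteratedDeriv (n+1) (fun x : ℝ => Real.pi * (x * sinc x)) := by
    rw [sin_eq_mul_sinc]
  have e2 : iteratedDeriv (n+1) (fun x : ℝ => Real.pi * (x * sinc x))
      = fun x => Real.pi * iteratedDeriv (n+1) (fun y : ℝ => y * sinc y) x := by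
    funext y
    rw [← iteratedDerivWithin_univ, ← iteratedDerivWithin_univ]
    exact iteratedDerivWithin_const_mul (Set.mem_univ y) uniqueDiffOn_univ Real.pi
      ((h1.of_le le_top).contDiffWithinAt)
  rw [sin_pi_iter (n+1), e2, mul_iter sinc sinc_contDiff n] at e
  exact congrFun e x

/-- For every `n ∈ ℕ` there is a constant `C > 0` (depending only on `n`)
such that `|sinc^{(n)}(x)| ≤ C/|x|` for all real `x ≠ 0`. -/
theorem stmt7 :
    ∀ n : ℕ, ∃ C : ℝ, 0 < C ∧ ∀ x : ℝ, x ≠ 0 → |iteratedDeriv n sinc x| ≤ C / |x| := by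
  intro n
  induction n with
  | zero =>
    refine ⟨1, one_pos, fun x hx => ?_⟩
    rw [iteratedDeriv_zero, sinc, if_neg hx, abs_div]
    have hpx : 0 < |Real.pi * x| := abs_pos.2 (mul_ne_zero Real.pi_ne_zero hx)
    calc |Real.sin (Real.pi * x)| / |Real.pi * x| ≤ 1 / |Real.pi * x| := by
          gcongr
          exact Real.abs_sin_le_one _
      _ ≤ 1 / |x| := by
          apply one_div_le_one_div_of_le (abs_pos.2 hx)
          rw [abs_mul, abs_of_pos Real.pi_pos]
          nlinarith [abs_pos.2 hx, Real.pi_gt_three]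
  | succ n ih =>
    obtain ⟨C, hC, hCb⟩ := ih
    have hdiffs : ∀ k : ℕ, Differentiable ℝ (iteratedDeriv k sinc) := fun k =>
      sinc_contDiff.differentiable_iteratedDeriv k (by simp)
    have hcont : Continuous (iteratedDeriv (n+1) sinc) := (hdiffs (n+1)).continuous
    obtain ⟨M, hM⟩ := (isCompact_Icc (a := (-1:ℝ)) (b := 1)).exists_bound_of_continuousOn
      hcont.continuousOn
    set C' : ℝ := max M 0 + Real.pi ^ n + (n+1 : ℕ) * C with hC'def
    have hpin : (0:ℝ) < Real.pi ^ n := pow_pos Real.pi_pos n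
    have hC'pos : 0 < C' := by
      have : (0:ℝ) ≤ (n+1 : ℕ) * C := by positivity
      have h0 : (0:ℝ) ≤ max M 0 := le_max_right _ _
      positivity
    refine ⟨C', hC'pos, fun x hx => ?_⟩
    have hxpos : 0 < |x| := abs_pos.2 hx
    rcases le_or_gt (|x|) 1 with hle | hgt
    · -- |x| ≤ 1 : use compact bound
      have hmem : x ∈ Set.Icc (-1:ℝ) 1 := abs_le.1 hle
      have h1 : |iteratedDeriv (n+1) sinc x| ≤ max M 0 :=
        le_trans (hM x hmem) (le_max_left _ _)
      have h2 : max M 0 ≤ C' := by nlinarith [mul_nonneg (Nat.cast_nonneg (n+1) : (0:ℝ) ≤ (n+1:ℕ)) hC.le]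
      rw [le_div_iff₀ hxpos]
      nlinarith [abs_nonneg (iteratedDeriv (n+1) sinc x)]
    · -- |x| > 1 : use the key identity
      have hkey := key_identity n x
      have hpi : (0:ℝ) < Real.pi := Real.pi_pos
      have hxf : x * iteratedDeriv (n+1) sinc x
          = Real.pi ^ n * Real.sin (Real.pi * x + (n+1 : ℕ) * (Real.pi / 2))
            - (n+1 : ℕ) * iteratedDeriv n sinc x := by
        have hc : Real.pi ^ n * Real.sin (Real.pi * x + (n+1 : ℕ) * (Real.pi / 2))
            = x * iteratedDeriv (n+1) sinc x + (n+1 : ℕ) * iteratedDeriv n sinc x :=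
          mul_left_cancel₀ hpi.ne' (by rw [← hkey]; ring)
        linarith [hc]
      have hb1 : |Real.pi ^ n * Real.sin (Real.pi * x + (n+1 : ℕ) * (Real.pi / 2))|
          ≤ Real.pi ^ n := by
        rw [abs_mul, abs_of_pos hpin]
        nlinarith [Real.abs_sin_le_one (Real.pi * x + (n+1 : ℕ) * (Real.pi / 2))]
      have hb2 : |((n+1 : ℕ) : ℝ) * iteratedDeriv n sinc x| ≤ (n+1 : ℕ) * C := by
        rw [abs_mul, Nat.abs_cast]
        have h3 : |iteratedDeriv n sinc x| ≤ C / |x| := hCb x hx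
        have h4 : C / |x| ≤ C := by
          rw [div_le_iff₀ hxpos]; nlinarith
        exact mul_le_mul_of_nonneg_left (h3.trans h4) (Nat.cast_nonneg _)
      have hxb : |x| * |iteratedDeriv (n+1) sinc x| ≤ Real.pi ^ n + (n+1 : ℕ) * C := by
        rw [← abs_mul, hxf]
        calc |_ - _| ≤ |Real.pi ^ n * Real.sin (Real.pi * x + (n+1 : ℕ) * (Real.pi / 2))|
              + |((n+1 : ℕ) : ℝ) * iteratedDeriv n sinc x| := abs_sub _ _
          _ ≤ Real.pi ^ n + (n+1 : ℕ) * C := add_le_add hb1 hb2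
      rw [le_div_iff₀ hxpos]
      calc |iteratedDeriv (n+1) sinc x| * |x| = |x| * |iteratedDeriv (n+1) sinc x| := by ring
        _ ≤ Real.pi ^ n + (n+1 : ℕ) * C := hxb
        _ ≤ C' := by rw [hC'def]; linarith [le_max_right M 0]
end

section
/- Let F : ℝ → ℂ be the restriction of an entire function of exponential type σ > 0 that is bounded on ℝ. Define F₁(t) = (F(t) − F(0))/t for t ≠ 0 and F₁(0) = F'(0). Then F₁ is the restriction of an entire function of exponential type σ and F₁ ∈ L²(ℝ), i.e. F₁ belongs to the Bernstein space B²_σ(ℝ). -/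
open Filter Topology MeasureTheory

/-- Let `F` be an entire function of exponential type `σ > 0` that is bounded
on the real line, and let `F₁(z) = (F(z) − F(0))/z` for `z ≠ 0`, `F₁(0) = F'(0)`.  Then `F₁`
is entire of exponential type `σ` and its restriction to `ℝ` is in `L²(ℝ)`, i.e.
`F₁ ∈ B²_σ(ℝ)`. -/
theorem stmt8 (σ : ℝ) (hσ : 0 < σ) (F : ℂ → ℂ)
    (hent : Differentiable ℂ F)
    (htype : ∃ A : ℝ, ∀ z : ℂ, ‖F z‖ ≤ A * Real.exp (σ * ‖z‖))
    (hbdd : ∃ M : ℝ, ∀ t : ℝ, ‖F (t : ℂ)‖ ≤ M)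
    (F₁ : ℂ → ℂ)
    (hF₁ : F₁ = fun z : ℂ => if z = 0 then deriv F 0 else (F z - F 0) / z) :
    Differentiable ℂ F₁ ∧
    (∃ A : ℝ, ∀ z : ℂ, ‖F₁ z‖ ≤ A * Real.exp (σ * ‖z‖)) ∧
    MemLp (fun t : ℝ => F₁ (t : ℂ)) 2 volume := by
  -- F₁ is the dslope of F at 0
  have hds : F₁ = dslope F 0 := by
    funext z
    by_cases hz : z = 0
    · simp [hF₁, hz, dslope_same]
    · rw [hF₁, dslope_of_ne _ hz]
      simp [hz, slope, div_eq_inv_mul]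
  have hdiff : Differentiable ℂ F₁ := by
    rw [hds, ← differentiableOn_univ]
    exact (Complex.differentiableOn_dslope (by simp)).2 hent.differentiableOn
  -- constants
  obtain ⟨A, hA⟩ := htype
  obtain ⟨M, hM⟩ := hbdd
  have hA0 : 0 ≤ A := by
    have := hA 0
    simp at this
    exact (norm_nonneg _).trans this
  have hM0 : 0 ≤ M := (norm_nonneg _).trans (hM 0)
  have hF0 : ‖F 0‖ ≤ M := by simpa using hM 0
  -- bound on the closed unit ball
  obtain ⟨C, hC⟩ := (isCompact_closedBall (0:ℂ) 1).exists_bound_of_continuousOn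
    hdiff.continuous.continuousOn
  have hC0 : 0 ≤ C := (norm_nonneg _).trans (hC 0 (by simp))
  -- bound for ‖z‖ ≥ 1
  have hbig : ∀ z : ℂ, 1 ≤ ‖z‖ → ‖F₁ z‖ ≤ (‖F z‖ + ‖F 0‖) / ‖z‖ := by
    intro z hz
    have hz0 : z ≠ 0 := by
      intro h; rw [h] at hz; simp at hz; linarith
    rw [hF₁]
    simp only [hz0, if_false, norm_div]
    gcongr
    exact norm_sub_le _ _
  refine ⟨hdiff, ⟨C + 2 * A, ?_⟩, ?_⟩
  · intro z
    have hexp : 1 ≤ Real.exp (σ * ‖z‖) := by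
      rw [Real.one_le_exp_iff]
      positivity
    by_cases h : ‖z‖ ≤ 1
    · have h1 : ‖F₁ z‖ ≤ C := hC z (by simpa using h)
      nlinarith
    · push_neg at h
      have h1 := hbig z h.le
      have h2 : (‖F z‖ + ‖F 0‖) / ‖z‖ ≤ ‖F z‖ + ‖F 0‖ := by
        apply div_le_self (by positivity) h.le
      have h3 : ‖F z‖ ≤ A * Real.exp (σ * ‖z‖) := hA z
      have h4 : ‖F 0‖ ≤ A := by
        have := hA 0; simpa using this
      have h5 : A ≤ A * Real.exp (σ * ‖z‖) := by nlinarith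
      nlinarith
  · -- L² membership
    set c : ℝ := 2 * C + 4 * M with hc
    have hc0 : 0 ≤ c := by positivity
    have hcont : Continuous (fun t : ℝ => F₁ (t : ℂ)) :=
      hdiff.continuous.comp Complex.continuous_ofReal
    set g : ℝ → ℝ := fun t => c / Real.sqrt (1 + t ^ 2) with hg
    have hsq : ∀ t : ℝ, 0 < Real.sqrt (1 + t ^ 2) := fun t =>
      Real.sqrt_pos.2 (by positivity)
    have hgmem : MemLp g 2 volume := by
      have hgc : Continuous g := by
        apply continuous_const.div
        · exact (continuous_const.add (continuous_pow 2)).sqrt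
        · exact fun t => (hsq t).ne'
      rw [memLp_two_iff_integrable_sq hgc.aestronglyMeasurable]
      have : (fun t : ℝ => g t ^ 2) = fun t : ℝ => c ^ 2 * (1 + t ^ 2)⁻¹ := by
        funext t
        rw [hg]
        rw [div_pow, Real.sq_sqrt (by positivity)]
        ring
      rw [this]
      exact integrable_inv_one_add_sq.const_mul _
    apply MemLp.of_le hgmem hcont.aestronglyMeasurable
    apply Filter.Eventually.of_forall
    intro t
    have hgt : ‖g t‖ = g t := Real.norm_of_nonneg (by positivity)
    rw [hgt, hg]
    by_cases h : |t| ≤ 1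
    · have h1 : ‖F₁ (t : ℂ)‖ ≤ C := by
        apply hC
        simp [Complex.norm_real, h]
      have h2 : Real.sqrt (1 + t ^ 2) ≤ 2 := by
        rw [show (2:ℝ) = Real.sqrt 4 by
          rw [show (4:ℝ) = 2 ^ 2 by norm_num, Real.sqrt_sq]; norm_num]
        apply Real.sqrt_le_sqrt
        nlinarith [abs_nonneg t, sq_abs t]
      have h3 : c / 2 ≤ c / Real.sqrt (1 + t ^ 2) := by
        apply div_le_div_of_nonneg_left hc0 (hsq t) h2
      calc ‖F₁ (t : ℂ)‖ ≤ C := h1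
        _ ≤ c / 2 := by rw [hc]; linarith
        _ ≤ _ := h3
    · push_neg at h
      have hnt : ‖(t : ℂ)‖ = |t| := by simp [Complex.norm_real]
      have h1 : ‖F₁ (t : ℂ)‖ ≤ (‖F (t : ℂ)‖ + ‖F 0‖) / |t| := by
        have := hbig (t : ℂ) (by rw [hnt]; exact h.le)
        rwa [hnt] at this
      have ht0 : (0:ℝ) < |t| := by linarith
      have h2 : (‖F (t : ℂ)‖ + ‖F 0‖) / |t| ≤ 2 * M / |t| := by
        gcongr
        have := hM t
        linarith
      have hs : Real.sqrt (1 + t ^ 2) ≤ 2 * |t| := by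
        rw [show 2 * |t| = Real.sqrt ((2 * |t|) ^ 2) from
          (Real.sqrt_sq (by positivity)).symm]
        apply Real.sqrt_le_sqrt
        nlinarith [sq_abs t]
      have h3 : 2 * M / |t| ≤ c / (2 * |t|) := by
        rw [div_le_div_iff₀ ht0 (by positivity)]
        nlinarith
      have h4 : c / (2 * |t|) ≤ c / Real.sqrt (1 + t ^ 2) := by
        gcongr
      calc ‖F₁ (t : ℂ)‖ ≤ _ := h1
        _ ≤ _ := h2
        _ ≤ _ := h3
        _ ≤ _ := h4
end

section
/- Let E be a Hilbert space and D a self-adjoint operator with associated direct-integral spectral representation F_D : E → ∫ A(λ) dm(λ) satisfying F_D(Df)(λ) = λ F_D(f)(λ). Then f ∈ B_σ(D) (i.e. f ∈ ∩_k dom(D^k) with ‖D^k f‖ ≤ σ^k‖f‖ for all k) if and only if the support of F_D f is contained in [−σ, σ]. Equivalently, f ∈ B_σ(D) iff the spectral measure ⟨P_Ω f, f⟩ of f is supported in [−σ, σ]. -/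
open Filter Topology MeasureTheory ENNReal

/-- Let `E` be a Hilbert space and `D` a self-adjoint operator given in its
spectral (direct-integral / multiplication-operator) representation: a unitary
`F : E ≃ L²(X, μ)` and a measurable real function `h` (the spectral variable `λ`) such that
applying `D` corresponds to multiplication by `h`.  Then `f ∈ B_σ(D)` — i.e. there is a chain
`Df : ℕ → E` of iterates `D^k f` (multiplication by `h` on the spectral side) with
`‖D^k f‖ ≤ σ^k ‖f‖` for all `k` — if and only if the support of `F f` is contained in
`{|λ| ≤ σ}`, i.e. `F f` vanishes a.e. on `{x : σ < |h x|}`. -/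
theorem stmt18 {E : Type*} [NormedAddCommGroup E] [InnerProductSpace ℂ E] [CompleteSpace E]
    {X : Type*} [MeasurableSpace X] (μ : Measure X)
    (h : X → ℝ) (hmeas : Measurable h)
    (F : E ≃ₗᵢ[ℂ] Lp ℂ 2 μ)
    (σ : ℝ) (hσ : 0 < σ) (f : E) :
    (∃ Df : ℕ → E, Df 0 = f ∧
        (∀ k : ℕ, (F (Df (k + 1)) : X → ℂ) =ᵐ[μ] fun x => (h x : ℂ) * (F (Df k) : X → ℂ) x) ∧
        (∀ k : ℕ, ‖Df k‖ ≤ σ ^ k * ‖f‖)) ↔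
      (∀ᵐ x ∂μ, σ < |h x| → (F f : X → ℂ) x = 0) := by
  set g : X → ℂ := (F f : X → ℂ) with hg
  have hgmem : MemLp g 2 μ := Lp.memLp (F f)
  have hgm : AEStronglyMeasurable g μ := hgmem.aestronglyMeasurable
  have hnormf : ‖f‖ = ‖F f‖ := (F.norm_map f).symm
  constructor
  · rintro ⟨Df, hDf0, hrec, hbd⟩
    have hiter : ∀ k : ℕ, (F (Df k) : X → ℂ) =ᵐ[μ] fun x => (h x : ℂ) ^ k * g x := by
      intro k
      induction k with
      | zero => simp [hDf0, hg]
      | succ k ih =>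
        refine (hrec k).trans ?_
        filter_upwards [ih] with x hx
        simp only [hx, pow_succ]
        ring
    have hbdE : ∀ k : ℕ, eLpNorm (fun x => (h x : ℂ) ^ k * g x) 2 μ ≤
        ENNReal.ofReal (σ ^ k * ‖f‖) := by
      intro k
      rw [← eLpNorm_congr_ae (hiter k)]
      have h1 : eLpNorm ((F (Df k) : X → ℂ)) 2 μ = ENNReal.ofReal ‖Df k‖ := by
        rw [← F.norm_map (Df k), Lp.norm_def,
          ENNReal.ofReal_toReal (Lp.eLpNorm_ne_top _)]
      rw [h1]
      exact ENNReal.ofReal_le_ofReal (hbd k)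
    have key : ∀ t : ℝ, σ < t → ∀ᵐ x ∂μ, t ≤ |h x| → g x = 0 := by
      intro t ht
      set A : Set X := {x | t ≤ |h x|} with hA
      have hAmeas : MeasurableSet A := measurableSet_le measurable_const hmeas.abs
      have htpos : 0 < t := hσ.trans ht
      have hind : ∀ k : ℕ, eLpNorm (A.indicator g) 2 μ ≤
          ENNReal.ofReal (t⁻¹ ^ k) * ENNReal.ofReal (σ ^ k * ‖f‖) := by
        intro k
        have hmono : ∀ᵐ x ∂μ, ‖A.indicator g x‖ ≤
            ‖(((t⁻¹ ^ k : ℝ) : ℂ)) • ((h x : ℂ) ^ k * g x)‖ := by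
          refine Eventually.of_forall fun x => ?_
          have hnorm : ‖(((t⁻¹ ^ k : ℝ) : ℂ)) • ((h x : ℂ) ^ k * g x)‖
              = (t⁻¹ * |h x|) ^ k * ‖g x‖ := by
            rw [norm_smul, norm_mul, norm_pow, Complex.norm_real, Complex.norm_real,
              Real.norm_eq_abs, Real.norm_eq_abs, abs_pow, abs_inv, abs_of_pos htpos,
              mul_pow, mul_assoc]
          rw [hnorm]
          by_cases hx : x ∈ A
          · rw [Set.indicator_of_mem hx]
            have hhx : t ≤ |h x| := hx
            have h1 : (1 : ℝ) ≤ (t⁻¹ * |h x|) ^ k := by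
              apply one_le_pow₀
              rw [← div_eq_inv_mul, le_div_iff₀ htpos]
              simpa using hhx
            calc ‖g x‖ = 1 * ‖g x‖ := (one_mul _).symm
              _ ≤ (t⁻¹ * |h x|) ^ k * ‖g x‖ :=
                  mul_le_mul_of_nonneg_right h1 (norm_nonneg _)
          · rw [Set.indicator_of_notMem hx]
            simp only [norm_zero]
            positivity
        calc eLpNorm (A.indicator g) 2 μ
            ≤ eLpNorm ((((t⁻¹ ^ k : ℝ) : ℂ)) • fun x => (h x : ℂ) ^ k * g x) 2 μ :=
              eLpNorm_mono_ae hmono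
          _ = ‖(((t⁻¹ ^ k : ℝ) : ℂ))‖₊ • eLpNorm (fun x => (h x : ℂ) ^ k * g x) 2 μ :=
              eLpNorm_const_smul _ _ _ _
          _ ≤ ENNReal.ofReal (t⁻¹ ^ k) * ENNReal.ofReal (σ ^ k * ‖f‖) := by
              rw [ENNReal.smul_def, smul_eq_mul]
              have hc : (‖(((t⁻¹ ^ k : ℝ) : ℂ))‖₊ : ℝ≥0∞) = ENNReal.ofReal (t⁻¹ ^ k) := by
                rw [← enorm_eq_nnnorm, ← ofReal_norm, Complex.norm_real,
                  Real.norm_eq_abs, abs_of_pos (by positivity)]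
              rw [hc]
              exact mul_le_mul_right (hbdE k) _
      have hlim : Tendsto (fun k : ℕ =>
          ENNReal.ofReal (t⁻¹ ^ k) * ENNReal.ofReal (σ ^ k * ‖f‖)) atTop (𝓝 0) := by
        have heq : ∀ k : ℕ, ENNReal.ofReal (t⁻¹ ^ k) * ENNReal.ofReal (σ ^ k * ‖f‖)
            = ENNReal.ofReal ((σ / t) ^ k * ‖f‖) := by
          intro k
          rw [← ENNReal.ofReal_mul (by positivity)]
          congr 1
          rw [div_pow]
          ring
        simp_rw [heq]
        have hc : |σ / t| < 1 := by
          rw [abs_of_pos (by positivity), div_lt_one htpos]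
          exact ht
        have h2 := (tendsto_pow_atTop_nhds_zero_of_abs_lt_one hc).mul_const ‖f‖
        rw [zero_mul] at h2
        simpa using ENNReal.tendsto_ofReal h2
      have hzero : eLpNorm (A.indicator g) 2 μ = 0 := by
        have := ge_of_tendsto' hlim fun k => hind k
        simpa using this
      have haez := (eLpNorm_eq_zero_iff (hgm.indicator hAmeas) (by norm_num)).mp hzero
      filter_upwards [haez] with x hx hxA
      have hxA' : x ∈ A := hxA
      have hxe : A.indicator g x = g x := Set.indicator_of_mem hxA' g
      rw [← hxe, hx]
      rfl
    have hall := ae_all_iff.mpr fun n : ℕ => key (σ + 1 / (n + 1)) (lt_add_of_pos_right _ (by positivity))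
    filter_upwards [hall] with x hx hσx
    obtain ⟨n, hn⟩ := exists_nat_one_div_lt (sub_pos.mpr hσx)
    exact hx n (by linarith)
  · intro hae
    set gk : ℕ → X → ℂ := fun k x => (h x : ℂ) ^ k * g x with hgk
    have hgkm : ∀ k, AEStronglyMeasurable (gk k) μ := fun k =>
      (((Complex.measurable_ofReal.comp hmeas).pow_const k).aestronglyMeasurable).mul hgm
    have hptbd : ∀ k : ℕ, ∀ᵐ x ∂μ, ‖gk k x‖ ≤ ‖(((σ ^ k : ℝ) : ℂ)) • g x‖ := by
      intro k
      filter_upwards [hae] with x hx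
      have hrhs : ‖(((σ ^ k : ℝ) : ℂ)) • g x‖ = σ ^ k * ‖g x‖ := by
        rw [norm_smul, Complex.norm_real, Real.norm_eq_abs, abs_of_pos (by positivity)]
      have hlhs : ‖gk k x‖ = |h x| ^ k * ‖g x‖ := by
        simp only [hgk, norm_mul, norm_pow, Complex.norm_real, Real.norm_eq_abs]
      rw [hrhs, hlhs]
      by_cases hxg : σ < |h x|
      · simp [hx hxg]
      · push_neg at hxg
        exact mul_le_mul_of_nonneg_right
          (pow_le_pow_left₀ (abs_nonneg _) hxg k) (norm_nonneg _)
    have hmem : ∀ k, MemLp (gk k) 2 μ := fun k =>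
      MemLp.of_le (hgmem.const_smul (((σ ^ k : ℝ) : ℂ))) (hgkm k) (hptbd k)
    refine ⟨fun k => F.symm ((hmem k).toLp (gk k)), ?_, ?_, ?_⟩
    · apply F.injective
      rw [LinearIsometryEquiv.apply_symm_apply]
      have h0 : (hmem 0).toLp (gk 0) = hgmem.toLp g :=
        (MemLp.toLp_eq_toLp_iff _ _).mpr (Filter.Eventually.of_forall fun x => by simp [hgk])
      rw [h0]
      exact Lp.toLp_coeFn (F f) hgmem
    · intro k
      have e1 : (F (F.symm ((hmem (k+1)).toLp (gk (k+1)))) : X → ℂ) =ᵐ[μ] gk (k+1) := by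
        rw [LinearIsometryEquiv.apply_symm_apply]
        exact MemLp.coeFn_toLp _
      have e2 : (F (F.symm ((hmem k).toLp (gk k))) : X → ℂ) =ᵐ[μ] gk k := by
        rw [LinearIsometryEquiv.apply_symm_apply]
        exact MemLp.coeFn_toLp _
      refine e1.trans ?_
      filter_upwards [e2] with x hx
      rw [hx]
      simp only [hgk, pow_succ]
      ring
    · intro k
      rw [F.symm.norm_map, Lp.norm_toLp]
      have hle : eLpNorm (gk k) 2 μ ≤ eLpNorm ((((σ ^ k : ℝ) : ℂ)) • g) 2 μ :=
        eLpNorm_mono_ae (hptbd k)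
      rw [eLpNorm_const_smul] at hle
      calc (eLpNorm (gk k) 2 μ).toReal
          ≤ ((‖(((σ ^ k : ℝ) : ℂ))‖₊ : ℝ≥0∞) * eLpNorm g 2 μ).toReal := by
            apply ENNReal.toReal_mono _ hle
            exact ENNReal.mul_ne_top ENNReal.coe_ne_top (Lp.eLpNorm_ne_top (F f))
        _ = σ ^ k * ‖f‖ := by
            rw [ENNReal.toReal_mul, hnormf, Lp.norm_def]
            congr 1
            simp [abs_pow, abs_of_pos hσ]
end
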